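/- arXiv:1305.4450 — 2 statements merged into one kernel-verified Lean document; each statement's English description precedes it below -/
import Mathlib

section
/- The q-stuffle product is associative: for all words u, v, w over Y, (u ⊛_q v) ⊛_q w = u ⊛_q (v ⊛_q w). -/
open scoped BigOperators

/-- Words over the alphabet `Y = {y_s : s ≥ 1}`: a word is a list of positive integers. -/
abbrev Word : Type := List ℕ+

/-- The weight of a word `y_{i_1} ⋯ y_{i_r}` is `i_1 + ⋯ + i_r`. -/
def weight (w : Word) : ℕ := (w.map (fun s => (s : ℕ))).sum

/-- Noncommutative polynomials over `R` on the alphabet `Y`. -/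
abbrev NCPoly (R : Type) [CommRing R] : Type := Word →₀ R

variable {R : Type} [CommRing R]

/-- The `q`-stuffle product of two words, as a polynomial. -/
noncomputable def stuf (q : R) : Word → Word → NCPoly R
  | [], v => Finsupp.single v 1
  | u, [] => Finsupp.single u 1
  | s :: u, t :: v =>
      Finsupp.mapDomain (fun w => s :: w) (stuf q u (t :: v)) +
      Finsupp.mapDomain (fun w => t :: w) (stuf q (s :: u) v) +
      q • Finsupp.mapDomain (fun w => (s + t) :: w) (stuf q u v)
  termination_by u v => u.length + v.length
  decreasing_by all_goals (simp only [List.length_cons]; omega)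

/-- Bilinear extension of the `q`-stuffle product to polynomials. -/
noncomputable def stufP (q : R) (P Q : NCPoly R) : NCPoly R :=
  P.sum fun u a => Q.sum fun v b => (a * b) • stuf q u v

/-- Concatenation product of polynomials. -/
noncomputable def concP (P Q : NCPoly R) : NCPoly R :=
  P.sum fun u a => Q.sum fun v b => Finsupp.single (u ++ v) (a * b)

/-- Concatenation product of a list of polynomials. -/
noncomputable def concList : List (NCPoly R) → NCPoly R
  | [] => Finsupp.single [] 1
  | P :: L => concP P (concList L)

/-- `q`-stuffle product of a list of words. -/
noncomputable def stufList (q : R) : List Word → NCPoly R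
  | [] => Finsupp.single [] 1
  | u :: L => stufP q (Finsupp.single u 1) (stufList q L)

/-- A formal power series over `Y` is a function `Word → R`; `S w = ⟨S, w⟩`. -/
def unitS : Word → R := fun w => if w = [] then 1 else 0

/-- Pairing `⟨S, P⟩ = Σ_w ⟨S,w⟩⟨P,w⟩` between a series and a polynomial. -/
noncomputable def pairS (S : Word → R) (P : NCPoly R) : R := P.sum fun w c => c * S w

/-- Pairing between two polynomials. -/
noncomputable def pairP (P Q : NCPoly R) : R := Q.sum fun w c => c * P w

/-- The finite set of all words of weight `n`. -/
noncomputable def wordsOfWeight : ℕ → Finset Word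
  | 0 => {[]}
  | n + 1 =>
      (Finset.range (n + 1)).attach.biUnion fun i =>
        (wordsOfWeight i.1).image fun w => (n + 1 - i.1).toPNat' :: w
  termination_by n => n
  decreasing_by exact Finset.mem_range.mp i.2

/-- All words of weight at most `n`. -/
noncomputable def wordsUpTo (n : ℕ) : Finset Word := (Finset.range (n + 1)).biUnion wordsOfWeight

/-- The `q`-stuffle product of two formal power series (coefficient-wise, the sum
is finite since the `q`-stuffle preserves weight). -/
noncomputable def stufS (q : R) (S T : Word → R) : Word → R :=
  fun w => ∑ u ∈ wordsUpTo (weight w), ∑ v ∈ wordsUpTo (weight w),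
    S u * T v * (stuf q u v) w

/-- `q`-stuffle product of a list of series. -/
noncomputable def stufSList (q : R) (L : List (Word → R)) : Word → R :=
  L.foldr (stufS q) unitS

/-- All ways of writing a word as a concatenation of nonempty words. -/
noncomputable def splits : Word → Finset (List Word)
  | [] => {[]}
  | a :: v =>
      (Finset.range (v.length + 1)).attach.biUnion fun i =>
        (splits (v.drop i.1)).image fun L => (a :: v.take i.1) :: L
  termination_by w => w.length
  decreasing_by simp [List.length_drop]

/-- Lists of length `n` with entries in the finite set `s`. -/
noncomputable def tuples (s : Finset Word) : ℕ → Finset (List Word)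
  | 0 => {[]}
  | n + 1 => s.biUnion fun u => (tuples s n).image fun L => u :: L

/-- The Eulerian-type projector `π₁` associated to the `q`-stuffle:
`π₁(w) = Σ_{k≥1} ((-1)^{k-1}/k) Σ_{u_1,…,u_k ∈ Y⁺} ⟨w | u_1 ⊛_q ⋯ ⊛_q u_k⟩ u_1⋯u_k`. -/
noncomputable def qpi1 [Algebra ℚ R] (q : R) (w : Word) : NCPoly R :=
  ∑ v ∈ wordsUpTo (weight w),
    Finsupp.single v
      (∑ n ∈ Finset.Icc 1 (weight w),
        ((-1 : ℚ) ^ (n - 1) / n) •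
          ∑ L ∈ (splits v).filter (fun L => L.length = n), (stufList q L) w)

/-- The adjoint projector `π̌₁`:
`π̌₁(w) = Σ_{k≥1} ((-1)^{k-1}/k) Σ_{u_1⋯u_k = w, u_i ∈ Y⁺} u_1 ⊛_q ⋯ ⊛_q u_k`. -/
noncomputable def qpi1Check [Algebra ℚ R] (q : R) (w : Word) : NCPoly R :=
  ∑ L ∈ splits w, ((-1 : ℚ) ^ (L.length - 1) / (L.length : ℚ)) • stufList q L

/-- `S` is primitive for the coproduct dual to the `q`-stuffle:
`Δ S = S ⊗ 1 + 1 ⊗ S`, read off on the coefficient at `u ⊗ v`. -/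
def IsPrimitive (q : R) (S : Word → R) : Prop :=
  ∀ u v : Word, pairS S (stuf q u v) =
    (if v = [] then S u else 0) + (if u = [] then S v else 0)

/-- `S` is group-like for the coproduct dual to the `q`-stuffle: `Δ S = S ⊗ S`. -/
def IsGroupLike (q : R) (S : Word → R) : Prop :=
  ∀ u v : Word, pairS S (stuf q u v) = S u * S v

/-- Concatenation (Cauchy) product of two series. -/
noncomputable def concS (S T : Word → R) : Word → R :=
  fun w => ∑ i ∈ Finset.range (w.length + 1), S (w.take i) * T (w.drop i)

/-- Concatenation powers of a series. -/
noncomputable def concPow (S : Word → R) : ℕ → Word → R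
  | 0 => unitS
  | n + 1 => concS S (concPow S n)

/-- Formal logarithm `log S = Σ_{n≥1} (-1)^{n-1} (S-1)^n / n` (for `S` with constant term 1,
the sum at a word `w` has at most `|w|` nonzero terms). -/
noncomputable def logS [Algebra ℚ R] (S : Word → R) : Word → R :=
  fun w => ∑ n ∈ Finset.Icc 1 w.length,
    ((-1 : ℚ) ^ (n - 1) / n) • concPow (S - unitS) n w

/-- The product on `R⟨⟨Y⟩⟩ ⊗^ R⟨⟨Y⟩⟩` where the left factor is multiplied by `⊛_q`
and the right factor by concatenation; a tensor is a function `Word → Word → R`. -/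
noncomputable def tmul (q : R) (A B : Word → Word → R) : Word → Word → R :=
  fun w w' => ∑ i ∈ Finset.range (w'.length + 1),
    stufS q (fun u => A u (w'.take i)) (fun u => B u (w'.drop i)) w

/-- The unit `1 ⊗ 1` of the tensor algebra. -/
def unitT : Word → Word → R := fun u v => if u = [] ∧ v = [] then 1 else 0

/-- Powers in the tensor algebra. -/
noncomputable def tpow (q : R) (A : Word → Word → R) : ℕ → Word → Word → R
  | 0 => unitT
  | n + 1 => tmul q A (tpow q A n)

/-- Formal logarithm in the tensor algebra. -/
noncomputable def logT [Algebra ℚ R] (q : R) (A : Word → Word → R) : Word → Word → R :=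
  fun w w' => ∑ n ∈ Finset.Icc 1 w'.length,
    ((-1 : ℚ) ^ (n - 1) / n) • tpow q (A - unitT) n w w'

/-- The diagonal series `D_Y = Σ_w w ⊗ w`. -/
def diagT : Word → Word → R := fun u v => if u = v then 1 else 0

/-- Order on words: lexicographic extension of the order `y_1 > y_2 > ⋯` on letters
(`wlt u v` means `u < v`). -/
def wlt (u v : Word) : Prop := List.Lex (fun a b : ℕ+ => b < a) u v

/-- A word is Lyndon if it is nonempty and strictly smaller than each of its proper suffixes. -/
def IsLyndon (w : Word) : Prop :=
  w ≠ [] ∧ ∀ i, 0 < i → i < w.length → wlt w (w.drop i)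

/-- Index of the standard factorization of a Lyndon word: the right factor is the
longest proper Lyndon suffix. -/
noncomputable def stdIdx (l : Word) : ℕ :=
  sInf {i | 0 < i ∧ i < l.length ∧ IsLyndon (l.drop i)}

/-- The family `Π_l`, for `l` a Lyndon word: `Π_{y_k} = π₁(y_k)`, and
`Π_l = [Π_s, Π_r]` for the standard factorization `l = (s, r)`. -/
noncomputable def PiL [Algebra ℚ R] (q : R) : Word → NCPoly R
  | [] => Finsupp.single [] 1
  | [s] => qpi1 q [s]
  | a :: b :: w =>
      if h : 0 < stdIdx (a :: b :: w) ∧ stdIdx (a :: b :: w) < (a :: b :: w).length then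
        concP (PiL q ((a :: b :: w).take (stdIdx (a :: b :: w))))
              (PiL q ((a :: b :: w).drop (stdIdx (a :: b :: w)))) -
        concP (PiL q ((a :: b :: w).drop (stdIdx (a :: b :: w))))
              (PiL q ((a :: b :: w).take (stdIdx (a :: b :: w))))
      else 0
  termination_by w => w.length
  decreasing_by all_goals (simp only [List.length_take, List.length_drop, List.length_cons] at h ⊢; omega)

/-- The Lyndon factorization of a word into a nonincreasing product of Lyndon words
(repeatedly take the longest Lyndon prefix). -/
noncomputable def lynFact : Word → List Word
  | [] => []
  | a :: w =>
      (a :: w).take (sSup {i | i ≤ w.length ∧ IsLyndon ((a :: w).take (i + 1))} + 1) ::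
      lynFact ((a :: w).drop (sSup {i | i ≤ w.length ∧ IsLyndon ((a :: w).take (i + 1))} + 1))
  termination_by w => w.length
  decreasing_by simp only [List.length_drop, List.length_cons]; omega

/-- The PBW-type basis: `Π_w = Π_{l_1} ⋯ Π_{l_n}` for the Lyndon factorization
`w = l_1 ⋯ l_n`, `l_1 ≥ ⋯ ≥ l_n`. -/
noncomputable def PiW [Algebra ℚ R] (q : R) (w : Word) : NCPoly R :=
  concList ((lynFact w).map (PiL q))

lemma stuf_nil_left (q : R) (v : Word) : stuf q [] v = Finsupp.single v 1 := by simp [stuf]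
lemma stuf_nil_right (q : R) (u : Word) : stuf q u [] = Finsupp.single u 1 := by cases u <;> simp [stuf]
lemma stuf_cons (q : R) (s t : ℕ+) (u v : Word) :
    stuf q (s::u) (t::v) = Finsupp.mapDomain (fun w => s :: w) (stuf q u (t :: v)) +
      Finsupp.mapDomain (fun w => t :: w) (stuf q (s :: u) v) +
      q • Finsupp.mapDomain (fun w => (s + t) :: w) (stuf q u v) := by rw [stuf]

noncomputable def PsAux (q : R) (P : NCPoly R) (w : Word) : NCPoly R := P.sum fun u a => a • stuf q u w
noncomputable def SpAux (q : R) (u : Word) (Q : NCPoly R) : NCPoly R := Q.sum fun v b => b • stuf q u v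

lemma mapDomain_sum_smul (f : Word → Word) (P : NCPoly R) (g : Word → NCPoly R) :
    (P.sum fun u a => a • Finsupp.mapDomain f (g u)) = Finsupp.mapDomain f (P.sum fun u a => a • g u) := by
  conv_rhs => rw [← Finsupp.mapDomain.addMonoidHom_apply, map_finsuppSum]
  simp [Finsupp.mapDomain.addMonoidHom_apply, Finsupp.mapDomain_smul]

lemma PsAux_single (q : R) (u : Word) (w : Word) : PsAux q (Finsupp.single u 1) w = stuf q u w := by
  simp [PsAux, Finsupp.sum_single_index]

lemma SpAux_single (q : R) (u : Word) (v : Word) : SpAux q u (Finsupp.single v 1) = stuf q u v := by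
  simp [SpAux, Finsupp.sum_single_index]

lemma PsAux_nil (q : R) (P : NCPoly R) : PsAux q P [] = P := by
  simp [PsAux, stuf_nil_right, Finsupp.smul_single]

lemma SpAux_nil (q : R) (Q : NCPoly R) : SpAux q [] Q = Q := by
  simp [SpAux, stuf_nil_left, Finsupp.smul_single]

lemma PsAux_add (q : R) (P P' : NCPoly R) (w : Word) :
    PsAux q (P + P') w = PsAux q P w + PsAux q P' w := by
  simp [PsAux, Finsupp.sum_add_index', add_smul]

lemma PsAux_smul (q r : R) (P : NCPoly R) (w : Word) :
    PsAux q (r • P) w = r • PsAux q P w := by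
  rw [PsAux, Finsupp.sum_smul_index, PsAux, Finsupp.smul_sum]
  · simp [mul_smul]
  · simp

lemma SpAux_add (q : R) (u : Word) (Q Q' : NCPoly R) :
    SpAux q u (Q + Q') = SpAux q u Q + SpAux q u Q' := by
  simp [SpAux, Finsupp.sum_add_index', add_smul]

lemma SpAux_smul (q r : R) (u : Word) (Q : NCPoly R) :
    SpAux q u (r • Q) = r • SpAux q u Q := by
  rw [SpAux, Finsupp.sum_smul_index, SpAux, Finsupp.smul_sum]
  · simp [mul_smul]
  · simp

lemma PsAux_mapDomain (q : R) (s t : ℕ+) (P : NCPoly R) (w : Word) :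
    PsAux q (Finsupp.mapDomain (fun x => s :: x) P) (t :: w) =
      Finsupp.mapDomain (fun x => s :: x) (PsAux q P (t :: w)) +
      Finsupp.mapDomain (fun x => t :: x) (PsAux q (Finsupp.mapDomain (fun x => s :: x) P) w) +
      q • Finsupp.mapDomain (fun x => (s + t) :: x) (PsAux q P w) := by
  rw [PsAux, Finsupp.sum_mapDomain_index (by simp) (by intros; rw [add_smul])]
  simp only [stuf_cons, smul_add]
  rw [Finsupp.sum_add, Finsupp.sum_add]
  congr 1
  · congr 1
    · exact mapDomain_sum_smul _ _ _
    · rw [PsAux, Finsupp.sum_mapDomain_index (by simp) (by intros; rw [add_smul])]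
      exact mapDomain_sum_smul _ _ _
  · simp only [smul_comm _ q]
    rw [PsAux, ← mapDomain_sum_smul, ← Finsupp.smul_sum]

lemma SpAux_mapDomain (q : R) (s t : ℕ+) (u : Word) (Q : NCPoly R) :
    SpAux q (s :: u) (Finsupp.mapDomain (fun x => t :: x) Q) =
      Finsupp.mapDomain (fun x => s :: x) (SpAux q u (Finsupp.mapDomain (fun x => t :: x) Q)) +
      Finsupp.mapDomain (fun x => t :: x) (SpAux q (s :: u) Q) +
      q • Finsupp.mapDomain (fun x => (s + t) :: x) (SpAux q u Q) := by
  rw [SpAux, Finsupp.sum_mapDomain_index (by simp) (by intros; rw [add_smul])]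
  simp only [stuf_cons, smul_add]
  rw [Finsupp.sum_add, Finsupp.sum_add]
  congr 1
  · congr 1
    · rw [SpAux, Finsupp.sum_mapDomain_index (by simp) (by intros; rw [add_smul])]
      exact mapDomain_sum_smul _ _ _
    · exact mapDomain_sum_smul _ _ _
  · simp only [smul_comm _ q]
    rw [SpAux, ← mapDomain_sum_smul, ← Finsupp.smul_sum]

lemma expandPs (q : R) (a b c : ℕ+) (u v w : Word) :
    PsAux q (stuf q (a::u) (b::v)) (c::w) =
      Finsupp.mapDomain (fun x => a :: x) (PsAux q (stuf q u (b::v)) (c::w)) +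
      Finsupp.mapDomain (fun x => b :: x) (PsAux q (stuf q (a::u) v) (c::w)) +
      Finsupp.mapDomain (fun x => c :: x) (PsAux q (stuf q (a::u) (b::v)) w) +
      q • (Finsupp.mapDomain (fun x => (a+b) :: x) (PsAux q (stuf q u v) (c::w)) +
           Finsupp.mapDomain (fun x => (a+c) :: x) (PsAux q (stuf q u (b::v)) w) +
           Finsupp.mapDomain (fun x => (b+c) :: x) (PsAux q (stuf q (a::u) v) w)) +
      q • q • Finsupp.mapDomain (fun x => (a+b+c) :: x) (PsAux q (stuf q u v) w) := by
  conv_lhs => rw [stuf_cons, PsAux_add, PsAux_add, PsAux_smul, PsAux_mapDomain,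
    PsAux_mapDomain, PsAux_mapDomain]
  conv_rhs => rw [stuf_cons q a b (u) (v), PsAux_add, PsAux_add, PsAux_smul,
    Finsupp.mapDomain_add, Finsupp.mapDomain_add, Finsupp.mapDomain_smul]
  module

lemma expandSp (q : R) (a b c : ℕ+) (u v w : Word) :
    SpAux q (a::u) (stuf q (b::v) (c::w)) =
      Finsupp.mapDomain (fun x => a :: x) (SpAux q u (stuf q (b::v) (c::w))) +
      Finsupp.mapDomain (fun x => b :: x) (SpAux q (a::u) (stuf q v (c::w))) +
      Finsupp.mapDomain (fun x => c :: x) (SpAux q (a::u) (stuf q (b::v) w)) +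
      q • (Finsupp.mapDomain (fun x => (a+b) :: x) (SpAux q u (stuf q v (c::w))) +
           Finsupp.mapDomain (fun x => (a+c) :: x) (SpAux q u (stuf q (b::v) w)) +
           Finsupp.mapDomain (fun x => (b+c) :: x) (SpAux q (a::u) (stuf q v w))) +
      q • q • Finsupp.mapDomain (fun x => (a+b+c) :: x) (SpAux q u (stuf q v w)) := by
  conv_lhs => rw [stuf_cons, SpAux_add, SpAux_add, SpAux_smul, SpAux_mapDomain,
    SpAux_mapDomain, SpAux_mapDomain]
  conv_rhs => rw [stuf_cons q b c (v) (w), SpAux_add, SpAux_add, SpAux_smul,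
    Finsupp.mapDomain_add, Finsupp.mapDomain_add, Finsupp.mapDomain_smul]
  simp only [← add_assoc]
  module

theorem key (q : R) : ∀ u v w : Word, PsAux q (stuf q u v) w = SpAux q u (stuf q v w)
  | [], v, w => by rw [stuf_nil_left, PsAux_single, SpAux_nil]
  | a::u, [], w => by rw [stuf_nil_right, stuf_nil_left, PsAux_single, SpAux_single]
  | a::u, b::v, [] => by rw [stuf_nil_right, PsAux_nil, SpAux_single]
  | a::u, b::v, c::w => by
      rw [expandPs, expandSp, key q u (b::v) (c::w), key q (a::u) v (c::w), key q (a::u) (b::v) w,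
        key q u v (c::w), key q u (b::v) w, key q (a::u) v w, key q u v w]
  termination_by u v w => u.length + v.length + w.length
  decreasing_by all_goals (simp only [List.length_cons]; omega)

lemma stufP_single_right (q : R) (P : NCPoly R) (w : Word) :
    stufP q P (Finsupp.single w 1) = PsAux q P w := by
  simp [stufP, PsAux, Finsupp.sum_single_index]

lemma stufP_single_left (q : R) (u : Word) (Q : NCPoly R) :
    stufP q (Finsupp.single u 1) Q = SpAux q u Q := by
  simp [stufP, SpAux, Finsupp.sum_single_index]

/-- The `q`-stuffle product is associative: `(u ⊛_q v) ⊛_q w = u ⊛_q (v ⊛_q w)`. -/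
theorem qstuffle_assoc (q : R) (u v w : Word) :
    stufP q (stuf q u v) (Finsupp.single w 1) = stufP q (Finsupp.single u 1) (stuf q v w) := by
  rw [stufP_single_right, stufP_single_left, key]
end

section
/- The logarithm of the diagonal series D_Y = Σ_{w ∈ Y*} w ⊗ w (in the algebra k⟨⟨Y⟩⟩ ⊗^ k⟨⟨Y⟩⟩ with product (⊛_q) ⊗ conc) equals Σ_{w ∈ Y^+} w ⊗ π_1(w), where π_1(w) = w + Σ_{k≥2} ((-1)^{k-1}/k) Σ_{u_1,...,u_k ∈ Y^+} ⟨w, u_1 ⊛_q ... ⊛_q u_k⟩ u_1...u_k. -/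
open scoped BigOperators

variable {R : Type} [CommRing R]

lemma weight_cons (a : ℕ+) (w : Word) : weight (a :: w) = a + weight w := by
  simp [weight]

lemma weight_eq_zero {w : Word} : weight w = 0 ↔ w = [] := by
  cases w with
  | nil => simp [weight]
  | cons a w => simp [weight_cons]

lemma weight_append (u v : Word) : weight (u ++ v) = weight u + weight v := by
  simp [weight]

lemma length_le_weight (w : Word) : w.length ≤ weight w := by
  induction w with
  | nil => simp [weight]
  | cons a w ih => simp only [List.length_cons, weight_cons]; have := a.pos; omega

lemma mem_wordsOfWeight : ∀ n (w : Word), w ∈ wordsOfWeight n ↔ weight w = n := by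
  intro n
  induction n using Nat.strong_induction_on with
  | _ n ih =>
    match n with
    | 0 => intro w; rw [wordsOfWeight]; simp [eq_comm, weight_eq_zero]
    | n + 1 =>
      intro w
      rw [wordsOfWeight]
      simp only [Finset.mem_biUnion, Finset.mem_attach, Finset.mem_image, true_and,
        Subtype.exists, Finset.mem_range]
      constructor
      · rintro ⟨i, hi, v, hv, rfl⟩
        rw [ih i hi] at hv
        rw [weight_cons, hv, PNat.toPNat'_coe (by omega)]
        omega
      · intro hw
        match w with
        | [] => simp [weight] at hw
        | a :: v =>
          rw [weight_cons] at hw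
          refine ⟨weight v, by have := a.pos; omega, v, ?_, ?_⟩
          · rw [ih (weight v) (by have := a.pos; omega)]
          · congr 1
            have : n + 1 - weight v = (a : ℕ) := by omega
            rw [this]
            exact a.coe_toPNat'

lemma mem_wordsUpTo {n : ℕ} {w : Word} : w ∈ wordsUpTo n ↔ weight w ≤ n := by
  simp only [wordsUpTo, Finset.mem_biUnion, Finset.mem_range]
  constructor
  · rintro ⟨i, hi, hw⟩; rw [mem_wordsOfWeight] at hw; omega
  · intro h; exact ⟨weight w, by omega, (mem_wordsOfWeight _ _).mpr rfl⟩

lemma cons_injective (a : ℕ+) : Function.Injective (fun w : Word => a :: w) :=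
  fun w₁ w₂ h => by simpa using h

lemma md_nil (a : ℕ+) (P : NCPoly R) :
    Finsupp.mapDomain (fun w => a :: w) P [] = 0 :=
  Finsupp.mapDomain_notin_range P _ (by rintro ⟨y, h⟩; cases h)

lemma md_cons (a b : ℕ+) (P : NCPoly R) (y : Word) :
    Finsupp.mapDomain (fun w => a :: w) P (b :: y) = if a = b then P y else 0 := by
  split
  · next h => subst h; exact Finsupp.mapDomain_apply (cons_injective a) P y
  · next h =>
    exact Finsupp.mapDomain_notin_range P _ (by rintro ⟨z, hz⟩; exact h (by injection hz))

lemma stuf_eq_zero (q : R) : ∀ (u v x : Word), weight x ≠ weight u + weight v →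
    stuf q u v x = 0 := by
  intro u v
  induction u, v using stuf.induct with
  | case1 v =>
    intro x hx
    rw [stuf, Finsupp.single_apply]
    simp only [weight] at hx ⊢
    rw [if_neg]; rintro rfl; simp at hx
  | case2 u hu =>
    intro x hx
    rw [stuf]
    · rw [Finsupp.single_apply, if_neg]
      rintro rfl; simp [weight] at hx
    · exact hu
  | case3 s u t v ih1 ih2 ih3 =>
    intro x hx
    rw [stuf]
    simp only [Finsupp.add_apply, Finsupp.smul_apply]
    match x with
    | [] => rw [md_nil, md_nil, md_nil]; simp
    | b :: y =>
      rw [md_cons, md_cons, md_cons]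
      rw [weight_cons, weight_cons, weight_cons] at hx
      have h1 : (if s = b then (stuf q u (t :: v)) y else 0) = 0 := by
        split
        · next h => subst h; exact ih1 y (by rw [weight_cons]; omega)
        · rfl
      have h2 : (if t = b then (stuf q (s :: u) v) y else 0) = 0 := by
        split
        · next h => subst h; exact ih2 y (by rw [weight_cons]; omega)
        · rfl
      have h3 : (if s + t = b then (stuf q u v) y else 0) = 0 := by
        split
        · next h =>
          subst h
          exact ih3 y (by have : ((s + t : ℕ+) : ℕ) = (s : ℕ) + t := rfl; omega)
        · rfl
      rw [h1, h2, h3]; simp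

lemma stufP_single_apply (q : R) (u : Word) (Q : NCPoly R) (x : Word) :
    stufP q (Finsupp.single u 1) Q x = ∑ v ∈ Q.support, Q v * stuf q u v x := by
  rw [stufP, Finsupp.sum_single_index]
  · rw [Finsupp.sum, Finsupp.finset_sum_apply]
    apply Finset.sum_congr rfl
    intro v hv
    simp [mul_comm]
  · simp [Finsupp.sum]

lemma stufList_eq_zero (q : R) : ∀ (L : List Word) (x : Word),
    weight x ≠ (L.map weight).sum → stufList q L x = 0 := by
  intro L
  induction L with
  | nil =>
    intro x hx
    rw [stufList, Finsupp.single_apply, if_neg]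
    rintro rfl; simp [weight] at hx
  | cons u L ih =>
    intro x hx
    rw [stufList, stufP_single_apply]
    apply Finset.sum_eq_zero
    intro v hv
    by_cases h : weight v = (L.map weight).sum
    · rw [stuf_eq_zero q u v x (by simp at hx; omega)]; ring
    · rw [ih v h]; ring

lemma sum_upTo_mul_stuf (q : R) (u : Word) (Q : NCPoly R) (x : Word) :
    ∑ v ∈ wordsUpTo (weight x), Q v * stuf q u v x
      = stufP q (Finsupp.single u 1) Q x := by
  rw [stufP_single_apply]
  have key : ∀ v : Word, v ∈ wordsUpTo (weight x) ∪ Q.support →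
      (v ∉ wordsUpTo (weight x) → Q v * stuf q u v x = 0) := by
    intro v _ hv
    rw [mem_wordsUpTo, not_le] at hv
    rw [stuf_eq_zero q u v x (by omega)]; ring
  have e1 : ∑ v ∈ Q.support, Q v * stuf q u v x
      = ∑ v ∈ wordsUpTo (weight x) ∪ Q.support, Q v * stuf q u v x :=
    Finset.sum_subset Finset.subset_union_right (fun v hv hv2 => by
      rw [Finsupp.notMem_support_iff.mp hv2, zero_mul])
  rw [e1]
  exact Finset.sum_subset Finset.subset_union_left (fun v hv h2 => key v hv h2)

lemma splits_nil : splits ([] : Word) = {[]} := by rw [splits.eq_1]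

lemma mem_splits_cons {a : ℕ+} {v : Word} {L : List Word} :
    L ∈ splits (a :: v) ↔
      ∃ i, i < v.length + 1 ∧ ∃ L', L' ∈ splits (v.drop i) ∧ L = (a :: v.take i) :: L' := by
  rw [splits.eq_2]
  simp only [Finset.mem_biUnion, Finset.mem_attach, Finset.mem_image, true_and,
    Subtype.exists, Finset.mem_range]
  constructor
  · rintro ⟨i, hi, L', hL', rfl⟩; exact ⟨i, hi, L', hL', rfl⟩
  · rintro ⟨i, hi, L', hL', rfl⟩; exact ⟨i, hi, L', hL', rfl⟩

lemma splits_join : ∀ (w : Word) (L : List Word), L ∈ splits w → L.flatten = w ∧ L.length ≤ w.length := by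
  suffices h : ∀ n (w : Word), w.length ≤ n → ∀ L ∈ splits w, L.flatten = w ∧ L.length ≤ w.length by
    intro w; exact h w.length w le_rfl
  intro n
  induction n with
  | zero =>
    intro w hw L hL
    match w, hw with
    | [], _ => rw [splits_nil] at hL; simp_all
  | succ n ih =>
    intro w hw
    match w with
    | [] => intro L hL; rw [splits_nil] at hL; simp_all
    | a :: v =>
      intro L hL
      rw [mem_splits_cons] at hL
      obtain ⟨i, hi, L', hL', rfl⟩ := hL
      have hlen : (v.drop i).length < (a :: v).length := by
        simp [List.length_drop]
      obtain ⟨h1, h2⟩ := ih (v.drop i) (by simp at hw ⊢; omega) L' hL'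
      constructor
      · simp [h1]
      · simp only [List.length_cons]
        rw [List.length_drop] at h2
        omega

lemma weight_flatten : ∀ L : List Word, (L.map weight).sum = weight L.flatten := by
  intro L
  induction L with
  | nil => simp [weight]
  | cons u L ih => simp [weight_append, ih]

lemma sum_splits_cons {M : Type*} [AddCommMonoid M] (a : ℕ+) (v : Word) (F : List Word → M) :
    ∑ L ∈ splits (a :: v), F L
      = ∑ i ∈ Finset.range (v.length + 1), ∑ L ∈ splits (v.drop i), F ((a :: v.take i) :: L) := by
  rw [splits.eq_2]
  have hdisj : (↑(Finset.range (v.length + 1)).attach : Set {x // x ∈ Finset.range (v.length + 1)}).PairwiseDisjoint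
      (fun i : {x // x ∈ Finset.range (v.length + 1)} =>
        ((splits (v.drop i.1)).image fun L => (a :: v.take i.1) :: L)) := by
    intro i _ j _ hij
    apply Finset.disjoint_left.mpr
    rintro L hL1 hL2
    simp only [Finset.mem_image] at hL1 hL2
    obtain ⟨L1, _, rfl⟩ := hL1
    obtain ⟨L2, _, h2⟩ := hL2
    apply hij
    have hh : (a :: v.take j.1) = (a :: v.take i.1) := ((List.cons.injEq _ _ _ _).mp h2).1
    have := congrArg List.length hh
    simp only [List.length_cons, List.length_take] at this
    have hi := Finset.mem_range.mp i.2
    have hj := Finset.mem_range.mp j.2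
    exact Subtype.ext (by omega)
  rw [Finset.sum_biUnion hdisj]
  rw [← Finset.sum_attach (Finset.range (v.length + 1))
    (fun i => ∑ L ∈ splits (v.drop i), F ((a :: v.take i) :: L))]
  refine Finset.sum_congr rfl (fun i _ => Finset.sum_image ?_)
  intro L1 _ L2 _ h
  injection h

lemma sum_splitsN_cons {M : Type*} [AddCommMonoid M] (a : ℕ+) (v : Word) (n : ℕ)
    (F : List Word → M) :
    ∑ L ∈ (splits (a :: v)).filter (fun L => L.length = n + 1), F L
      = ∑ i ∈ Finset.range (v.length + 1),
          ∑ L ∈ (splits (v.drop i)).filter (fun L => L.length = n), F ((a :: v.take i) :: L) := by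
  rw [Finset.sum_filter, sum_splits_cons a v (fun L => if L.length = n + 1 then F L else 0)]
  apply Finset.sum_congr rfl
  intro i _
  rw [Finset.sum_filter]
  apply Finset.sum_congr rfl
  intro L _
  simp

lemma diag_sub_unit_apply (u v : Word) :
    (diagT - unitT : Word → Word → R) u v = if u = v ∧ v ≠ [] then 1 else 0 := by
  have : (diagT - unitT : Word → Word → R) u v = diagT u v - unitT u v := rfl
  rw [this, diagT, unitT]
  by_cases h1 : u = v
  · subst h1
    by_cases h2 : u = [] <;> simp [h2]
  · rw [if_neg h1, if_neg (fun h : u = [] ∧ v = [] => h1 (h.1.trans h.2.symm)),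
      if_neg (fun h : u = v ∧ v ≠ [] => h1 h.1), sub_zero]

lemma stufS_term (q : R) (t : Word) (T : Word → R) (x : Word) (ht : t ≠ []) :
    stufS q (fun u => if u = t ∧ t ≠ [] then (1 : R) else 0) T x
      = ∑ v ∈ wordsUpTo (weight x), T v * stuf q t v x := by
  rw [stufS]
  have h1 : ∀ u v : Word, (if u = t ∧ t ≠ [] then (1 : R) else 0) * T v * stuf q u v x
      = if u = t then T v * stuf q t v x else 0 := by
    intro u v
    by_cases h : u = t
    · subst h; simp [ht]
    · simp [h]
  simp_rw [h1]
  have h2 : ∀ u : Word, ∑ v ∈ wordsUpTo (weight x),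
      (if u = t then T v * stuf q t v x else 0)
      = if u = t then ∑ v ∈ wordsUpTo (weight x), T v * stuf q t v x else 0 := by
    intro u; by_cases h : u = t <;> simp [h]
  simp_rw [h2]
  rw [Finset.sum_ite_eq' (wordsUpTo (weight x)) t]
  by_cases hU : t ∈ wordsUpTo (weight x)
  · rw [if_pos hU]
  · rw [if_neg hU]
    symm
    apply Finset.sum_eq_zero
    intro v _
    rw [mem_wordsUpTo, not_le] at hU
    rw [stuf_eq_zero q t v x (by omega)]
    ring

lemma stufS_zero_fun (q : R) (T : Word → R) (x : Word) :
    stufS q (fun _ => (0 : R)) T x = 0 := by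
  rw [stufS]
  apply Finset.sum_eq_zero
  intro u _
  apply Finset.sum_eq_zero
  intro v _
  ring

lemma tpow_diag (q : R) : ∀ (n : ℕ) (w w' : Word),
    tpow q (diagT - unitT) n w w'
      = ∑ L ∈ (splits w').filter (fun L => L.length = n), stufList q L w := by
  intro n
  induction n with
  | zero =>
    intro w w'
    match w' with
    | [] =>
      rw [splits_nil]
      have : ({[]} : Finset (List Word)).filter (fun L => L.length = 0) = {[]} := by
        simp [Finset.filter_singleton]
      rw [this, Finset.sum_singleton, stufList, Finsupp.single_apply, tpow]
      rw [unitT]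
      by_cases h : w = [] <;> simp [h, eq_comm]
    | a :: v =>
      have : (splits (a :: v)).filter (fun L => L.length = 0) = ∅ := by
        rw [Finset.filter_eq_empty_iff]
        intro L hL
        rw [mem_splits_cons] at hL
        obtain ⟨i, hi, L', hL', rfl⟩ := hL
        simp
      rw [this, Finset.sum_empty, tpow, unitT]
      simp
  | succ n ih =>
    intro w w'
    rw [tpow, tmul]
    simp_rw [diag_sub_unit_apply]
    match w' with
    | [] =>
      rw [show (List.length ([] : Word) + 1) = 1 from rfl, Finset.sum_range_one]
      have h0 : (fun u : Word => if u = (([] : Word).take 0) ∧ (([] : Word).take 0) ≠ [] then (1:R) else 0) = fun _ => (0 : R) := by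
        funext u; simp
      rw [h0, stufS_zero_fun]
      have : (splits ([] : Word)).filter (fun L => L.length = n + 1) = ∅ := by
        rw [splits_nil, Finset.filter_eq_empty_iff]
        intro L hL
        simp at hL
        subst hL
        simp
      rw [this, Finset.sum_empty]
    | a :: v =>
      rw [show (a :: v).length + 1 = (v.length + 1) + 1 from rfl, Finset.sum_range_succ']
      have h0 : (fun u : Word => if u = ((a :: v).take 0) ∧ ((a :: v).take 0) ≠ [] then (1:R) else 0) = fun _ => (0 : R) := by
        funext u; simp
      rw [h0, stufS_zero_fun, add_zero]
      rw [sum_splitsN_cons a v n (fun L => stufList q L w)]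
      apply Finset.sum_congr rfl
      intro i _
      rw [show (a :: v).take (i + 1) = a :: v.take i from rfl,
        show (a :: v).drop (i + 1) = v.drop i from rfl]
      rw [stufS_term q (a :: v.take i) _ w (by simp)]
      simp_rw [ih]
      simp_rw [Finset.sum_mul]
      rw [Finset.sum_comm]
      apply Finset.sum_congr rfl
      intro L _
      rw [sum_upTo_mul_stuf q (a :: v.take i) (stufList q L) w, stufList]

/-- The logarithm of the diagonal series `D_Y = Σ_w w ⊗ w`, in the algebra
with product `⊛_q` on the left tensor factor and concatenation on the right, equals
`Σ_{w ∈ Y⁺} w ⊗ π₁(w)`: coefficientwise, `⟨log D_Y, w ⊗ w'⟩ = ⟨π₁(w), w'⟩`. -/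
theorem log_diagonal (q : R) [Algebra ℚ R] (w w' : Word) :
    logT q diagT w w' = (qpi1 q w) w' := by
  have hq : (qpi1 q w) w' = if w' ∈ wordsUpTo (weight w) then
      (∑ n ∈ Finset.Icc 1 (weight w), ((-1 : ℚ) ^ (n - 1) / n) •
        ∑ L ∈ (splits w').filter (fun L => L.length = n), stufList q L w) else 0 := by
    rw [qpi1, Finsupp.finset_sum_apply]
    simp_rw [Finsupp.single_apply]
    rw [Finset.sum_ite_eq' (wordsUpTo (weight w)) w']
  rw [hq, logT]
  simp_rw [tpow_diag]
  split
  · next hU =>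
    rw [mem_wordsUpTo] at hU
    apply Finset.sum_subset
    · intro n hn
      simp only [Finset.mem_Icc] at hn ⊢
      have := length_le_weight w'
      omega
    · intro n hn hn2
      simp only [Finset.mem_Icc, not_and, not_le] at hn hn2
      have : (splits w').filter (fun L => L.length = n) = ∅ := by
        rw [Finset.filter_eq_empty_iff]
        intro L hL
        have := (splits_join w' L hL).2
        omega
      rw [this, Finset.sum_empty, smul_zero]
  · next hU =>
    rw [mem_wordsUpTo, not_le] at hU
    apply Finset.sum_eq_zero
    intro n _
    have : ∑ L ∈ (splits w').filter (fun L => L.length = n), stufList q L w = 0 := by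
      apply Finset.sum_eq_zero
      intro L hL
      rw [Finset.mem_filter] at hL
      obtain ⟨hj, _⟩ := splits_join w' L hL.1
      apply stufList_eq_zero
      rw [weight_flatten, hj]
      omega
    rw [this, smul_zero]
end
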